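/- For every p ∈ (1, 2] there exists a constant c_p ∈ (0, 2), independent of the dimension and of the block decomposition, such that for every n ∈ ℕ, every block decomposition k of {1, …, n}, every r > 0, and every u ∈ ℝ^n with ‖u‖_{p,k,n} ≤ 2r, the volume of the intersection of the two superballs satisfies vol(B^n_{p,k}(u, 2r) ∩ B^n_{p,k}(0, ‖u‖_{p,k,n})) ≤ (c_p/2)^n · vol(B^n_{p,k}(0, 2r)). -/

import Mathlib

open MeasureTheory Filter
open scoped BigOperators ENNReal

/-- The superball norm on `ℝ^n` associated to exponent `p` and a block decomposition
given by `m` blocks with endpoints `k 0 = 0 < k 1 < ⋯ < k m = n`: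
`‖x‖ = (∑_{j<m} ‖(x_{k j}, …, x_{k (j+1) - 1})‖₂^p)^(1/p)`. -/
noncomputable def superNorm (p : ℝ) {n : ℕ} (m : ℕ) (k : ℕ → ℕ) (x : Fin n → ℝ) : ℝ :=
  (∑ j ∈ Finset.range m,
      (Real.sqrt (∑ i : Fin n, if k j ≤ (i : ℕ) ∧ (i : ℕ) < k (j + 1) then x i ^ 2 else 0)) ^ p)
    ^ (1 / p)

/-- `k` is a block decomposition of `{1, …, n}` into `m` blocks. -/
def IsBlockDecomp (n m : ℕ) (k : ℕ → ℕ) : Prop :=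
  0 < m ∧ k 0 = 0 ∧ k m = n ∧ ∀ j < m, k j < k (j + 1)

/-- The superball with center `c` and radius `r`. -/
noncomputable def superBall (p : ℝ) {n : ℕ} (m : ℕ) (k : ℕ → ℕ) (c : Fin n → ℝ) (r : ℝ) :
    Set (Fin n → ℝ) :=
  {y | superNorm p m k (y - c) ≤ r}

/-- `P` is the set of centers of a translative packing of superballs of radius `r`. -/
def IsSuperballPacking (p : ℝ) {n : ℕ} (m : ℕ) (k : ℕ → ℕ) (r : ℝ)
    (P : Set (Fin n → ℝ)) : Prop :=
  ∀ x ∈ P, ∀ y ∈ P, x ≠ y → 2 * r ≤ superNorm p m k (x - y)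

/-- The translative packing density of superballs of radius `r` in `ℝ^n`. -/
noncomputable def packingDensity (p : ℝ) (n m : ℕ) (k : ℕ → ℕ) (r : ℝ) : ℝ :=
  limsup (fun R : ℝ =>
      ⨆ P : {P : Set (Fin n → ℝ) // IsSuperballPacking p m k r P},
        (volume ((⋃ x ∈ P.1, superBall p m k x r) ∩ superBall p m k 0 R)).toReal /
          (volume (superBall p m k (0 : Fin n → ℝ) R)).toReal) atTop

/-- The canonical hard superball model partition function `Ẑ_S(t)`. -/
noncomputable def Zhat (p : ℝ) {n : ℕ} (m : ℕ) (k : ℕ → ℕ) (r : ℝ) (S : Set (Fin n → ℝ))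
    (t : ℕ) : ℝ :=
  ((t.factorial : ℝ))⁻¹ *
    ∫ x : Fin t → Fin n → ℝ in Set.univ.pi fun _ => S,
      Set.indicator
        {y : Fin t → Fin n → ℝ | ∀ i j : Fin t, i ≠ j → 2 * r ≤ superNorm p m k (y i - y j)}
        (fun _ => (1 : ℝ)) x

/-- The grand canonical hard superball model partition function `Z_S(λ)`. -/
noncomputable def Zgc (p : ℝ) {n : ℕ} (m : ℕ) (k : ℕ → ℕ) (r : ℝ) (S : Set (Fin n → ℝ))
    (lam : ℝ) : ℝ :=
  ∑' t : ℕ, lam ^ t * Zhat p m k r S t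

/-- The expected packing density `α_S(λ)` of the hard superball model. -/
noncomputable def alphaDen (p : ℝ) {n : ℕ} (m : ℕ) (k : ℕ → ℕ) (r : ℝ) (S : Set (Fin n → ℝ))
    (lam : ℝ) : ℝ :=
  lam * deriv (Zgc p m k r S) lam / ((volume S).toReal * Zgc p m k r S lam)


open scoped Pointwise

private lemma hd_rpow {p x : ℝ} (h1 : (0:ℝ) < 1 + x) :
    HasDerivAt (fun y => (1+y) ^ p) (p * (1+x) ^ (p-1)) x := by
  have h := (Real.hasDerivAt_rpow_const (p := p) (x := 1+x) (Or.inl h1.ne')).comp x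
    ((hasDerivAt_id x).const_add 1)
  exact h.congr_deriv (mul_one _)

/-- midpoint strong-convexity inequality -/
lemma ms_key {p : ℝ} (hp1 : 1 < p) (hp2 : p ≤ 2) {t : ℝ} (ht : t ∈ Set.Icc (-1:ℝ) 1) :
    2 + p * (p-1) / 2 * t ^ 2 ≤ (1+t) ^ p + (1-t) ^ p := by
  have hp0 : (0:ℝ) < p := by linarith
  set g : ℝ → ℝ := fun x => (1+x) ^ p - p * (p-1) / 4 * x ^ 2 with hg
  have hconv : ConvexOn ℝ (Set.Icc (-1:ℝ) 1) g := by
    have hD : Convex ℝ (Set.Icc (-1:ℝ) 1) := convex_Icc _ _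
    apply convexOn_of_hasDerivWithinAt2_nonneg hD
      (f' := fun x => p * (1+x) ^ (p-1) - p * (p-1) / 2 * x)
      (f'' := fun x => p * (p-1) * (1+x) ^ (p-2) - p * (p-1) / 2)
    · apply ContinuousOn.sub
      · exact ((continuous_const.add continuous_id).rpow_const
          (fun x => Or.inr hp0.le)).continuousOn
      · fun_prop
    · intro x hx
      rw [interior_Icc] at hx
      have h1 : (0:ℝ) < 1 + x := by linarith [hx.1]
      have H : HasDerivAt g (p * (1+x) ^ (p-1) - p * (p-1) / 2 * x) x := by
        have := (hd_rpow (p := p) h1).sub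
          ((hasDerivAt_pow 2 x).const_mul (p * (p-1) / 4))
        refine this.congr_deriv ?_
        push_cast; ring
      exact H.hasDerivWithinAt
    · intro x hx
      rw [interior_Icc] at hx
      have h1 : (0:ℝ) < 1 + x := by linarith [hx.1]
      have H : HasDerivAt (fun x => p * (1+x) ^ (p-1) - p * (p-1) / 2 * x)
          (p * (p-1) * (1+x) ^ (p-2) - p * (p-1) / 2) x := by
        have := ((hd_rpow (p := p-1) h1).const_mul p).sub
          ((hasDerivAt_id x).const_mul (p * (p-1) / 2))
        refine this.congr_deriv ?_
        have : p - 1 - 1 = p - 2 := by ring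
        rw [this]; ring
      exact H.hasDerivWithinAt
    · intro x hx
      rw [interior_Icc] at hx
      have h1 : (0:ℝ) < 1 + x := by linarith [hx.1]
      have h2 : (2:ℝ) ^ (p-2) ≤ (1+x) ^ (p-2) :=
        Real.rpow_le_rpow_of_nonpos h1 (by linarith [hx.2]) (by linarith)
      have h3 : (2:ℝ)⁻¹ ≤ (2:ℝ) ^ (p-2) := by
        have : (2:ℝ) ^ (-1:ℝ) ≤ (2:ℝ) ^ (p-2) :=
          Real.rpow_le_rpow_of_exponent_le one_le_two (by linarith)
        rwa [Real.rpow_neg_one] at this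
      have h4 : 0 ≤ p * (p-1) := mul_nonneg hp0.le (by linarith)
      nlinarith [h4]
  have h0 : g 0 ≤ (g t + g (-t)) / 2 := by
    have hmem : t ∈ Set.Icc (-1:ℝ) 1 := ht
    have hmem' : -t ∈ Set.Icc (-1:ℝ) 1 := by
      constructor <;> [linarith [ht.2]; linarith [ht.1]]
    have h := hconv.2 hmem hmem' (by norm_num : (0:ℝ) ≤ 1/2) (by norm_num : (0:ℝ) ≤ 1/2)
      (by norm_num)
    have e : (1/2:ℝ) • t + (1/2:ℝ) • (-t) = 0 := by simp [smul_eq_mul]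
    rw [e] at h
    simp only [smul_eq_mul] at h
    linarith
  have e0 : g 0 = 1 := by simp [hg]
  have et : g t = (1+t)^p - p*(p-1)/4 * t^2 := rfl
  have emt : g (-t) = (1-t)^p - p*(p-1)/4 * t^2 := by
    simp only [hg]
    rw [show (1:ℝ) + -t = 1 - t by ring]
    ring_nf
  rw [e0, et, emt] at h0
  linarith

/-- two-point 2-uniform convexity inequality -/
lemma tp_key {p : ℝ} (hp1 : 1 < p) (hp2 : p ≤ 2) {A B : ℝ} (hA : 0 ≤ A) (hB : 0 ≤ B) :
    (A+B) ^ 2 + (p-1)/2 * (A-B) ^ 2 ≤ (2 ^ (p-1) * (A ^ p + B ^ p)) ^ (2/p) := by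
  have hp0 : (0:ℝ) < p := by linarith
  rcases eq_or_lt_of_le (add_nonneg hA hB) with h0 | hAB
  · have hA0 : A = 0 := by linarith
    have hB0 : B = 0 := by linarith
    rw [hA0, hB0]
    simp [Real.zero_rpow hp0.ne', Real.zero_rpow (show (2:ℝ)/p ≠ 0 by positivity)]
  · set m : ℝ := (A+B)/2 with hm
    have hm0 : 0 < m := by rw [hm]; positivity
    set t : ℝ := (A-B)/(A+B) with htdef
    have ht1 : |t| ≤ 1 := by
      rw [abs_le]
      constructor
      · rw [le_div_iff₀ hAB]; nlinarith
      · rw [div_le_iff₀ hAB]; nlinarith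
    have hAeq : A = m * (1+t) := by rw [hm, htdef]; field_simp; ring
    have hBeq : B = m * (1-t) := by rw [hm, htdef]; field_simp; ring
    have h1t : (0:ℝ) ≤ 1 + t := by rcases abs_le.1 ht1 with ⟨h, _⟩; linarith
    have h1t' : (0:ℝ) ≤ 1 - t := by rcases abs_le.1 ht1 with ⟨_, h⟩; linarith
    have hsum : A ^ p + B ^ p = m ^ p * ((1+t) ^ p + (1-t) ^ p) := by
      rw [hAeq, hBeq, Real.mul_rpow hm0.le h1t, Real.mul_rpow hm0.le h1t']
      ring
    have hms := ms_key hp1 hp2 (abs_le.1 ht1)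
    have hmp : (0:ℝ) ≤ m ^ p := Real.rpow_nonneg hm0.le _
    have hs0 : (0:ℝ) ≤ p*(p-1)/4 * t^2 :=
      mul_nonneg (by nlinarith) (sq_nonneg t)
    have hstep : (2*m) ^ p * (1 + p*(p-1)/4 * t^2) ≤ 2 ^ (p-1) * (A ^ p + B ^ p) := by
      rw [hsum, Real.mul_rpow (by norm_num) hm0.le]
      have h2p : (2:ℝ) ^ p = 2 ^ (p-1) * 2 := by
        rw [Real.rpow_sub (by norm_num : (0:ℝ) < 2), Real.rpow_one]
        field_simp
      calc (2:ℝ) ^ p * m ^ p * (1 + p*(p-1)/4 * t^2)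
          = 2 ^ (p-1) * (m ^ p * (2 * (1 + p*(p-1)/4 * t^2))) := by
            rw [h2p]; ring
        _ ≤ 2 ^ (p-1) * (m ^ p * ((1+t) ^ p + (1-t) ^ p)) := by
            apply mul_le_mul_of_nonneg_left _ (by positivity)
            apply mul_le_mul_of_nonneg_left _ hmp
            nlinarith [hms]
    have h2m0 : (0:ℝ) ≤ 2*m := by linarith
    have hL : (0:ℝ) ≤ (2*m) ^ p * (1 + p*(p-1)/4 * t^2) :=
      mul_nonneg (Real.rpow_nonneg h2m0 _) (by linarith)
    have hmono := Real.rpow_le_rpow hL hstep (by positivity : (0:ℝ) ≤ 2/p)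
    have hLeq : ((2*m) ^ p * (1 + p*(p-1)/4 * t^2)) ^ (2/p)
        = (2*m) ^ (2:ℕ) * (1 + p*(p-1)/4 * t^2) ^ (2/p) := by
      rw [Real.mul_rpow (Real.rpow_nonneg h2m0 _) (by linarith)]
      rw [← Real.rpow_natCast (2*m) 2, ← Real.rpow_mul h2m0]
      congr 2
      push_cast
      field_simp
    have hbern : 1 + (2/p) * (p*(p-1)/4 * t^2) ≤ (1 + p*(p-1)/4 * t^2) ^ (2/p) :=
      one_add_mul_self_le_rpow_one_add (by linarith) ((one_le_div hp0).2 hp2)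
    have hmid : (2*m) ^ (2:ℕ) * (1 + (2/p) * (p*(p-1)/4 * t^2))
        ≤ (2*m) ^ (2:ℕ) * (1 + p*(p-1)/4 * t^2) ^ (2/p) :=
      mul_le_mul_of_nonneg_left hbern (by positivity)
    have hfin : (A+B) ^ 2 + (p-1)/2 * (A-B) ^ 2
        = (2*m) ^ (2:ℕ) * (1 + (2/p) * (p*(p-1)/4 * t^2)) := by
      have h2m : 2*m = A+B := by rw [hm]; ring
      have htt : (A+B) * t = A - B := by rw [htdef]; field_simp
      rw [h2m]
      have hgen : ∀ X : ℝ, X ^ 2 * ((2/p) * (p*(p-1)/4 * t^2)) = (p-1)/2 * (X*t)^2 := by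
        intro X
        field_simp
        ring
      have hex : (A+B) ^ 2 * ((2/p) * (p*(p-1)/4 * t^2)) = (p-1)/2 * (A-B)^2 := by
        rw [← htt]; exact hgen (A+B)
      linear_combination -hex
    rw [hfin]
    calc (2*m) ^ (2:ℕ) * (1 + (2/p) * (p*(p-1)/4 * t^2))
        ≤ (2*m) ^ (2:ℕ) * (1 + p*(p-1)/4 * t^2) ^ (2/p) := hmid
      _ = ((2*m) ^ p * (1 + p*(p-1)/4 * t^2)) ^ (2/p) := hLeq.symm
      _ ≤ (2 ^ (p-1) * (A ^ p + B ^ p)) ^ (2/p) := hmono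

/-- superadditivity of the `ℓ_q` quasinorm for `0 < q ≤ 1` -/
lemma rm_superadd {q : ℝ} (hq0 : 0 < q) (hq1 : q ≤ 1) {M : ℕ} (u v : ℕ → ℝ)
    (hu : ∀ j, 0 ≤ u j) (hv : ∀ j, 0 ≤ v j) :
    (∑ j ∈ Finset.range M, u j ^ q) ^ (1/q) + (∑ j ∈ Finset.range M, v j ^ q) ^ (1/q)
      ≤ (∑ j ∈ Finset.range M, (u j + v j) ^ q) ^ (1/q) := by
  set Su := ∑ j ∈ Finset.range M, u j ^ q with hSu
  set Sv := ∑ j ∈ Finset.range M, v j ^ q with hSv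
  have hSu0 : 0 ≤ Su := Finset.sum_nonneg fun j _ => Real.rpow_nonneg (hu j) _
  have hSv0 : 0 ≤ Sv := Finset.sum_nonneg fun j _ => Real.rpow_nonneg (hv j) _
  have hmono : ∀ {a b : ℝ}, 0 ≤ a → a ≤ b → a ^ (1/q) ≤ b ^ (1/q) :=
    fun ha hab => Real.rpow_le_rpow ha hab (by positivity)
  have hzero : ∀ (w w' : ℕ → ℝ), (∀ j, 0 ≤ w j) → (∀ j, 0 ≤ w' j) →
      (∑ j ∈ Finset.range M, w j ^ q) = 0 →
      ∀ j ∈ Finset.range M, (w j + w' j) ^ q = w' j ^ q := by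
    intro w w' hw hw' hS j hj
    have h1 : ∀ j ∈ Finset.range M, (0:ℝ) ≤ w j ^ q :=
      fun j _ => Real.rpow_nonneg (hw j) _
    have h2 := (Finset.sum_eq_zero_iff_of_nonneg h1).1 hS j hj
    have h3 : w j = 0 := by
      by_contra hne
      exact hne (by
        have := Real.rpow_natCast (w j) 0
        have hwj : 0 < w j := lt_of_le_of_ne (hw j) (Ne.symm hne)
        exact absurd h2 (ne_of_gt (Real.rpow_pos_of_pos hwj q)))
    rw [h3, zero_add]
  rcases eq_or_lt_of_le hSu0 with hU0 | hU
  · rw [← hU0, Real.zero_rpow (by positivity : (1:ℝ)/q ≠ 0), zero_add]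
    apply hmono hSv0
    rw [Finset.sum_congr rfl (hzero u v hu hv hU0.symm)]
  rcases eq_or_lt_of_le hSv0 with hV0 | hV
  · rw [← hV0, Real.zero_rpow (by positivity : (1:ℝ)/q ≠ 0), add_zero]
    apply hmono hSu0
    refine le_of_eq (Finset.sum_congr rfl ?_).symm
    intro j hj
    rw [add_comm]
    exact hzero v u hv hu hV0.symm j hj
  · set U := Su ^ (1/q) with hUdef
    set V := Sv ^ (1/q) with hVdef
    have hUpos : 0 < U := Real.rpow_pos_of_pos hU _
    have hVpos : 0 < V := Real.rpow_pos_of_pos hV _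
    have hUVpos : 0 < U + V := by linarith
    set lam := U / (U+V) with hlam
    set mu := V / (U+V) with hmu
    have hlam0 : 0 < lam := by positivity
    have hmu0 : 0 < mu := by positivity
    have hlammu : lam + mu = 1 := by rw [hlam, hmu]; field_simp
    have hUq : U ^ q = Su := by
      rw [hUdef, ← Real.rpow_mul hSu0, one_div_mul_cancel hq0.ne', Real.rpow_one]
    have hVq : V ^ q = Sv := by
      rw [hVdef, ← Real.rpow_mul hSv0, one_div_mul_cancel hq0.ne', Real.rpow_one]
    have key : ∀ j, lam ^ (1-q) * u j ^ q + mu ^ (1-q) * v j ^ q ≤ (u j + v j) ^ q := by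
      intro j
      have hconc := (Real.concaveOn_rpow hq0.le hq1).2
        (Set.mem_Ici.2 (div_nonneg (hu j) hlam0.le))
        (Set.mem_Ici.2 (div_nonneg (hv j) hmu0.le)) hlam0.le hmu0.le hlammu
      simp only [smul_eq_mul] at hconc
      have e1 : lam * (u j / lam) + mu * (v j / mu) = u j + v j := by
        field_simp
      rw [e1] at hconc
      refine le_trans (le_of_eq ?_) hconc
      rw [Real.div_rpow (hu j) hlam0.le, Real.div_rpow (hv j) hmu0.le]
      rw [Real.rpow_sub hlam0, Real.rpow_one, Real.rpow_sub hmu0, Real.rpow_one]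
      field_simp
    have hsumkey : lam ^ (1-q) * Su + mu ^ (1-q) * Sv
        ≤ ∑ j ∈ Finset.range M, (u j + v j) ^ q := by
      rw [hSu, hSv, Finset.mul_sum, Finset.mul_sum, ← Finset.sum_add_distrib]
      exact Finset.sum_le_sum fun j _ => key j
    have hUVq : lam ^ (1-q) * Su + mu ^ (1-q) * Sv = (U+V) ^ q := by
      rw [← hUq, ← hVq]
      have eU : U = lam * (U+V) := by rw [hlam]; field_simp
      have eV : V = mu * (U+V) := by rw [hmu]; field_simp
      calc lam ^ (1-q) * U ^ q + mu ^ (1-q) * V ^ q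
          = lam ^ (1-q) * (lam * (U+V)) ^ q + mu ^ (1-q) * (mu * (U+V)) ^ q := by
            rw [← eU, ← eV]
        _ = lam ^ (1-q) * (lam ^ q * (U+V) ^ q) + mu ^ (1-q) * (mu ^ q * (U+V) ^ q) := by
            rw [Real.mul_rpow hlam0.le hUVpos.le, Real.mul_rpow hmu0.le hUVpos.le]
        _ = (lam ^ (1-q) * lam ^ q + mu ^ (1-q) * mu ^ q) * (U+V) ^ q := by ring
        _ = (U+V) ^ q := by
            rw [← Real.rpow_add hlam0, ← Real.rpow_add hmu0]
            simp [hlammu]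
    have : (U+V) ^ q ≤ ∑ j ∈ Finset.range M, (u j + v j) ^ q := hUVq ▸ hsumkey
    have hfin := hmono (Real.rpow_nonneg hUVpos.le q) this
    rwa [← Real.rpow_mul hUVpos.le, mul_one_div_cancel hq0.ne', Real.rpow_one] at hfin


noncomputable def blk {n : ℕ} (k : ℕ → ℕ) (j : ℕ) (x : Fin n → ℝ) :
    EuclideanSpace ℝ (Fin n) :=
  WithLp.toLp 2 (fun i => if k j ≤ (i : ℕ) ∧ (i : ℕ) < k (j + 1) then x i else 0)

lemma superNorm_eq (p : ℝ) {n : ℕ} (m : ℕ) (k : ℕ → ℕ) (x : Fin n → ℝ) :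
    superNorm p m k x = (∑ j ∈ Finset.range m, ‖blk k j x‖ ^ p) ^ (1/p) := by
  unfold superNorm
  congr 1
  refine Finset.sum_congr rfl fun j _ => ?_
  congr 1
  rw [EuclideanSpace.norm_eq]
  congr 1
  refine Finset.sum_congr rfl fun i _ => ?_
  by_cases h : k j ≤ (i : ℕ) ∧ (i : ℕ) < k (j + 1) <;>
    simp [blk, h, Real.norm_eq_abs, sq_abs]

lemma blk_add {n : ℕ} (k : ℕ → ℕ) (j : ℕ) (x y : Fin n → ℝ) :
    blk k j (x + y) = blk k j x + blk k j y := by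
  ext i
  simp only [blk, PiLp.add_apply, Pi.add_apply, PiLp.toLp_apply]
  by_cases h : k j ≤ (i : ℕ) ∧ (i : ℕ) < k (j + 1) <;> simp [h]

lemma blk_sub {n : ℕ} (k : ℕ → ℕ) (j : ℕ) (x y : Fin n → ℝ) :
    blk k j (x - y) = blk k j x - blk k j y := by
  ext i
  simp only [blk, PiLp.sub_apply, Pi.sub_apply, PiLp.toLp_apply]
  by_cases h : k j ≤ (i : ℕ) ∧ (i : ℕ) < k (j + 1) <;> simp [h]

lemma blk_smul {n : ℕ} (k : ℕ → ℕ) (j : ℕ) (c : ℝ) (x : Fin n → ℝ) :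
    blk k j (c • x) = c • blk k j x := by
  ext i
  simp only [blk, PiLp.smul_apply, Pi.smul_apply, smul_eq_mul, PiLp.toLp_apply]
  by_cases h : k j ≤ (i : ℕ) ∧ (i : ℕ) < k (j + 1) <;> simp [h]

lemma superNorm_nonneg (p : ℝ) {n : ℕ} (m : ℕ) (k : ℕ → ℕ) (x : Fin n → ℝ) :
    0 ≤ superNorm p m k x := by
  rw [superNorm_eq]
  exact Real.rpow_nonneg
    (Finset.sum_nonneg fun j _ => Real.rpow_nonneg (norm_nonneg _) _) _

lemma superNorm_smul {p : ℝ} (hp : 0 < p) {n : ℕ} (m : ℕ) (k : ℕ → ℕ) {c : ℝ} (hc : 0 ≤ c)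
    (x : Fin n → ℝ) : superNorm p m k (c • x) = c * superNorm p m k x := by
  rw [superNorm_eq, superNorm_eq]
  have h1 : ∀ j, ‖blk k j (c • x)‖ ^ p = c ^ p * ‖blk k j x‖ ^ p := by
    intro j
    rw [blk_smul, norm_smul, Real.norm_eq_abs, abs_of_nonneg hc,
      Real.mul_rpow hc (norm_nonneg _)]
  simp only [h1]
  rw [← Finset.mul_sum,
    Real.mul_rpow (Real.rpow_nonneg hc _)
      (Finset.sum_nonneg fun j _ => Real.rpow_nonneg (norm_nonneg _) _),
    ← Real.rpow_mul hc, mul_one_div_cancel hp.ne', Real.rpow_one]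

lemma superNorm_rpow (p : ℝ) (hp : 0 < p) {n : ℕ} (m : ℕ) (k : ℕ → ℕ) (x : Fin n → ℝ) :
    superNorm p m k x ^ p = ∑ j ∈ Finset.range m, ‖blk k j x‖ ^ p := by
  rw [superNorm_eq, ← Real.rpow_mul
    (Finset.sum_nonneg fun j _ => Real.rpow_nonneg (norm_nonneg _) _),
    one_div_mul_cancel hp.ne', Real.rpow_one]

/-- termwise inequality in Euclidean blocks -/
lemma blk_term {p : ℝ} (hp1 : 1 < p) (hp2 : p ≤ 2) {E : Type*} [NormedAddCommGroup E]
    [InnerProductSpace ℝ E] (a b : E) :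
    (‖a+b‖ ^ (2:ℕ) + (p-1)/2 * ‖a-b‖ ^ (2:ℕ)) ^ (p/2)
      ≤ 2 ^ (p-1) * (‖a‖ ^ p + ‖b‖ ^ p) := by
  have hp0 : (0:ℝ) < p := by linarith
  have hK0 : (0:ℝ) ≤ (p-1)/2 := by linarith
  have hK1 : (p-1)/2 ≤ 1 := by linarith
  have par : ‖a+b‖ ^ (2:ℕ) + ‖a-b‖ ^ (2:ℕ) = 2 * (‖a‖ ^ (2:ℕ) + ‖b‖ ^ (2:ℕ)) := by
    have h := parallelogram_law_with_norm ℝ a b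
    nlinarith [h]
  have tri : ‖a+b‖ ≤ ‖a‖ + ‖b‖ := norm_add_le _ _
  have hT2 : ‖a+b‖ ^ (2:ℕ) ≤ (‖a‖ + ‖b‖) ^ (2:ℕ) :=
    pow_le_pow_left₀ (norm_nonneg _) tri 2
  have step1 : ‖a+b‖ ^ (2:ℕ) + (p-1)/2 * ‖a-b‖ ^ (2:ℕ)
      ≤ (‖a‖ + ‖b‖) ^ (2:ℕ) + (p-1)/2 * (‖a‖ - ‖b‖) ^ (2:ℕ) := by
    nlinarith [par, hT2, mul_nonneg (sub_nonneg.2 hK1) (sub_nonneg.2 hT2)]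
  have step2 := tp_key hp1 hp2 (norm_nonneg a) (norm_nonneg b)
  have hcomb : ‖a+b‖ ^ (2:ℕ) + (p-1)/2 * ‖a-b‖ ^ (2:ℕ)
      ≤ (2 ^ (p-1) * (‖a‖ ^ p + ‖b‖ ^ p)) ^ (2/p) := le_trans step1 step2
  have hnn : (0:ℝ) ≤ ‖a+b‖ ^ (2:ℕ) + (p-1)/2 * ‖a-b‖ ^ (2:ℕ) := by positivity
  have hY : (0:ℝ) ≤ 2 ^ (p-1) * (‖a‖ ^ p + ‖b‖ ^ p) := by
    have h1 := Real.rpow_nonneg (norm_nonneg a) p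
    have h2 := Real.rpow_nonneg (norm_nonneg b) p
    positivity
  have h := Real.rpow_le_rpow hnn hcomb (by positivity : (0:ℝ) ≤ p/2)
  rwa [← Real.rpow_mul hY, show 2/p * (p/2) = 1 by field_simp, Real.rpow_one] at h

/-- 2-uniform convexity inequality for the super norm -/
lemma bcl {p : ℝ} (hp1 : 1 < p) (hp2 : p ≤ 2) {n : ℕ} (m : ℕ) (k : ℕ → ℕ) (x y : Fin n → ℝ) :
    superNorm p m k (x+y) ^ (2:ℕ) + (p-1)/2 * superNorm p m k (x-y) ^ (2:ℕ)
      ≤ (2 ^ (p-1) * (superNorm p m k x ^ p + superNorm p m k y ^ p)) ^ (2/p) := by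
  have hp0 : (0:ℝ) < p := by linarith
  have hq0 : (0:ℝ) < p/2 := by positivity
  have hq1 : p/2 ≤ 1 := by linarith
  have hK0 : (0:ℝ) ≤ (p-1)/2 := by linarith
  -- the sums of q-powers
  have hsum : ∑ j ∈ Finset.range m,
        (‖blk k j (x+y)‖ ^ (2:ℕ) + (p-1)/2 * ‖blk k j (x-y)‖ ^ (2:ℕ)) ^ (p/2)
      ≤ 2 ^ (p-1) * (superNorm p m k x ^ p + superNorm p m k y ^ p) := by
    rw [superNorm_rpow p hp0, superNorm_rpow p hp0, ← Finset.sum_add_distrib, Finset.mul_sum]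
    refine Finset.sum_le_sum fun j _ => ?_
    have h := blk_term hp1 hp2 (blk k j x) (blk k j y)
    rwa [← blk_add, ← blk_sub] at h
  have hrm := rm_superadd hq0 hq1 (M := m)
    (fun j => ‖blk k j (x+y)‖ ^ (2:ℕ))
    (fun j => (p-1)/2 * ‖blk k j (x-y)‖ ^ (2:ℕ))
    (fun j => by positivity) (fun j => by positivity)
  -- identify the three quasinorm expressions
  have e2q : ∀ c : ℝ, 0 ≤ c → (c ^ (2:ℕ)) ^ (p/2) = c ^ p := by
    intro c hc
    rw [← Real.rpow_natCast c 2, ← Real.rpow_mul hc]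
    congr 1
    push_cast
    ring
  have eTsum : ∑ j ∈ Finset.range m, (‖blk k j (x+y)‖ ^ (2:ℕ)) ^ (p/2)
      = superNorm p m k (x+y) ^ p := by
    rw [superNorm_rpow p hp0]
    exact Finset.sum_congr rfl fun j _ => e2q _ (norm_nonneg _)
  have eDsum : ∑ j ∈ Finset.range m, ((p-1)/2 * ‖blk k j (x-y)‖ ^ (2:ℕ)) ^ (p/2)
      = ((p-1)/2) ^ (p/2) * superNorm p m k (x-y) ^ p := by
    rw [superNorm_rpow p hp0, Finset.mul_sum]
    refine Finset.sum_congr rfl fun j _ => ?_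
    rw [Real.mul_rpow hK0 (by positivity), e2q _ (norm_nonneg _)]
  rw [eTsum, eDsum] at hrm
  have hNxy0 := superNorm_nonneg p m k (x+y)
  have hNxy0' := superNorm_nonneg p m k (x-y)
  have eA : (superNorm p m k (x+y) ^ p) ^ (1/(p/2)) = superNorm p m k (x+y) ^ (2:ℕ) := by
    rw [← Real.rpow_natCast _ 2, ← Real.rpow_mul hNxy0]
    congr 1
    push_cast
    field_simp
  have eB : (((p-1)/2) ^ (p/2) * superNorm p m k (x-y) ^ p) ^ (1/(p/2))
      = (p-1)/2 * superNorm p m k (x-y) ^ (2:ℕ) := by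
    rw [Real.mul_rpow (Real.rpow_nonneg hK0 _) (Real.rpow_nonneg hNxy0' _),
      ← Real.rpow_mul hK0, mul_one_div_cancel hq0.ne', Real.rpow_one,
      ← Real.rpow_natCast _ 2, ← Real.rpow_mul hNxy0']
    congr 2
    push_cast
    field_simp
  rw [eA, eB] at hrm
  refine le_trans hrm ?_
  have hS0 : (0:ℝ) ≤ ∑ j ∈ Finset.range m,
      (‖blk k j (x+y)‖ ^ (2:ℕ) + (p-1)/2 * ‖blk k j (x-y)‖ ^ (2:ℕ)) ^ (p/2) :=
    Finset.sum_nonneg fun j _ => Real.rpow_nonneg (by positivity) _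
  have := Real.rpow_le_rpow hS0 hsum (by positivity : (0:ℝ) ≤ 1/(p/2))
  refine le_trans this (le_of_eq ?_)
  congr 1
  field_simp

lemma coord_le_superNorm {p : ℝ} (hp : 1 ≤ p) {n m : ℕ} {k : ℕ → ℕ}
    (hbd : IsBlockDecomp n m k) (x : Fin n → ℝ) (i : Fin n) :
    |x i| ≤ superNorm p m k x := by
  obtain ⟨hm, hk0, hkm, hinc⟩ := hbd
  have hp0 : (0:ℝ) < p := by linarith
  -- find the block containing i
  set F := (Finset.range m).filter (fun j => k j ≤ (i:ℕ)) with hF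
  have h0F : 0 ∈ F := by
    simp [hF, Finset.mem_filter, Finset.mem_range, hk0, hm]
  have hFne : F.Nonempty := ⟨0, h0F⟩
  set j₀ := F.max' hFne with hj₀
  have hj₀F : j₀ ∈ F := F.max'_mem hFne
  have hj₀m : j₀ < m := (Finset.mem_filter.1 hj₀F).1 |> Finset.mem_range.1
  have hle : k j₀ ≤ (i:ℕ) := (Finset.mem_filter.1 hj₀F).2
  have hlt : (i:ℕ) < k (j₀ + 1) := by
    by_contra hcon
    push_neg at hcon
    rcases lt_or_eq_of_le (Nat.succ_le_of_lt hj₀m) with h | h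
    · have : j₀ + 1 ∈ F := by
        simp only [hF, Finset.mem_filter, Finset.mem_range]
        exact ⟨h, hcon⟩
      have := F.le_max' _ this
      omega
    · have : k m ≤ (i:ℕ) := by rw [← h]; exact hcon
      rw [hkm] at this
      exact absurd this (not_le.2 i.isLt)
  -- |x i| ≤ ‖blk k j₀ x‖
  have h1 : |x i| ≤ ‖blk k j₀ x‖ := by
    rw [EuclideanSpace.norm_eq]
    have : |x i| = Real.sqrt (|x i| ^ 2) := by
      rw [Real.sqrt_sq_eq_abs, abs_abs]
    rw [this]
    apply Real.sqrt_le_sqrt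
    have hmem : ‖blk k j₀ x i‖ ^ 2 = |x i| ^ 2 := by
      simp [blk, hle, hlt, Real.norm_eq_abs, sq_abs]
    calc |x i| ^ 2 = ‖blk k j₀ x i‖ ^ 2 := hmem.symm
      _ ≤ ∑ i' : Fin n, ‖blk k j₀ x i'‖ ^ 2 :=
        Finset.single_le_sum (f := fun i' => ‖blk k j₀ x i'‖ ^ 2)
          (fun i' _ => sq_nonneg _) (Finset.mem_univ i)
  refine le_trans h1 ?_
  -- ‖blk k j₀ x‖ ≤ superNorm
  have h2 : ‖blk k j₀ x‖ ^ p ≤ superNorm p m k x ^ p := by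
    rw [superNorm_rpow p hp0]
    exact Finset.single_le_sum (f := fun j => ‖blk k j x‖ ^ p)
      (fun j _ => Real.rpow_nonneg (norm_nonneg _) _) (Finset.mem_range.2 hj₀m)
  have := Real.rpow_le_rpow (Real.rpow_nonneg (norm_nonneg _) _) h2
    (by positivity : (0:ℝ) ≤ 1/p)
  rwa [← Real.rpow_mul (norm_nonneg _), ← Real.rpow_mul (superNorm_nonneg p m k x),
    mul_one_div_cancel hp0.ne', Real.rpow_one, Real.rpow_one] at this


/-- **Key geometric lemma (inside Lemma 9): intersection volume of two superballs.**
For every `p ∈ (1, 2]` there is a constant `c_p ∈ (0, 2)`, independent of the dimension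
and of the block decomposition, such that for every `n`, every block decomposition `k` of
`{1, …, n}`, every `r > 0`, and every `u` with `‖u‖_{p,k,n} ≤ 2r`:
`vol(B(u, 2r) ∩ B(0, ‖u‖)) ≤ (c_p/2)^n · vol(B(0, 2r))`. -/
theorem superball_intersection_volume_bound (p : ℝ) (hp1 : 1 < p) (hp2 : p ≤ 2) :
    ∃ c : ℝ, 0 < c ∧ c < 2 ∧
      ∀ n m : ℕ, ∀ k : ℕ → ℕ, IsBlockDecomp n m k → ∀ r : ℝ, 0 < r →
        ∀ u : Fin n → ℝ, superNorm p m k u ≤ 2 * r →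
          (volume (superBall p m k u (2 * r) ∩
              superBall p m k (0 : Fin n → ℝ) (superNorm p m k u))).toReal ≤
            (c / 2) ^ n * (volume (superBall p m k (0 : Fin n → ℝ) (2 * r))).toReal := by
  have hp0 : (0:ℝ) < p := by linarith
  set K : ℝ := (p-1)/2 with hKdef
  have hK0 : 0 < K := by rw [hKdef]; linarith
  have h4K : (0:ℝ) < 4 + K := by linarith
  set c : ℝ := 4 / Real.sqrt (4 + K) with hcdef
  have hsqrt_pos : 0 < Real.sqrt (4 + K) := Real.sqrt_pos.2 h4K
  have hc0 : 0 < c := by positivity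
  have hc2 : c < 2 := by
    rw [hcdef, div_lt_iff₀ hsqrt_pos]
    have h2lt : (2:ℝ) < Real.sqrt (4 + K) := by
      rw [show (2:ℝ) = Real.sqrt 4 by
        rw [show (4:ℝ) = 2^2 by norm_num, Real.sqrt_sq (by norm_num : (0:ℝ) ≤ 2)]]
      exact Real.sqrt_lt_sqrt (by norm_num) (by linarith)
    linarith
  have hcsq : c ^ (2:ℕ) = 16 / (4 + K) := by
    rw [hcdef, div_pow, Real.sq_sqrt h4K.le]
    norm_num
  refine ⟨c, hc0, hc2, ?_⟩
  intro n m k hbd r hr u hu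
  set s := superNorm p m k u with hsdef
  have hs0 : 0 ≤ s := superNorm_nonneg p m k u
  -- key containment: the intersection is inside a superball of radius c*r
  obtain ⟨z, hsub⟩ : ∃ z : Fin n → ℝ,
      superBall p m k u (2*r) ∩ superBall p m k (0 : Fin n → ℝ) s
        ⊆ superBall p m k z (c*r) := by
    by_cases hsc : s ≤ c * r
    · refine ⟨0, fun y hy => ?_⟩
      have h2 := hy.2
      simp only [superBall, Set.mem_setOf_eq] at h2 ⊢
      exact le_trans h2 hsc
    · push_neg at hsc
      refine ⟨(2⁻¹:ℝ) • u, fun y hy => ?_⟩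
      obtain ⟨hy1, hy2⟩ := hy
      simp only [superBall, Set.mem_setOf_eq, sub_zero] at hy1 hy2 ⊢
      -- apply bcl to y and y - u
      have hb := bcl hp1 hp2 m k y (y - u)
      rw [sub_sub_cancel] at hb
      have hNy : superNorm p m k y ≤ 2*r := le_trans hy2 hu
      have hNyu : superNorm p m k (y - u) ≤ 2*r := hy1
      -- bound the RHS of hb
      have hrhs : 2 ^ (p-1) * (superNorm p m k y ^ p + superNorm p m k (y-u) ^ p)
          ≤ (4*r) ^ p := by
        have e1 : superNorm p m k y ^ p ≤ (2*r) ^ p :=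
          Real.rpow_le_rpow (superNorm_nonneg p m k y) hNy hp0.le
        have e2 : superNorm p m k (y-u) ^ p ≤ (2*r) ^ p :=
          Real.rpow_le_rpow (superNorm_nonneg p m k (y-u)) hNyu hp0.le
        have e3 : (4*r : ℝ) ^ p = 2 ^ (p-1) * (2 * (2*r) ^ p) := by
          rw [show (4*r : ℝ) = 2 * (2*r) by ring,
            Real.mul_rpow (by norm_num) (by positivity),
            Real.rpow_sub (by norm_num : (0:ℝ) < 2), Real.rpow_one]
          field_simp
        rw [e3]
        have h2p : (0:ℝ) < 2 ^ (p-1) := Real.rpow_pos_of_pos (by norm_num) _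
        nlinarith [e1, e2, h2p]
      have hrhs2 : (2 ^ (p-1) * (superNorm p m k y ^ p + superNorm p m k (y-u) ^ p)) ^ (2/p)
          ≤ ((4*r) ^ p) ^ (2/p) := by
        apply Real.rpow_le_rpow _ hrhs (by positivity)
        have h1 := Real.rpow_nonneg (superNorm_nonneg p m k y) p
        have h2 := Real.rpow_nonneg (superNorm_nonneg p m k (y-u)) p
        positivity
      have e4 : ((4*r : ℝ) ^ p) ^ (2/p) = (4*r) ^ (2:ℕ) := by
        rw [← Real.rpow_mul (by positivity : (0:ℝ) ≤ 4*r),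
          show p * (2/p) = 2 by field_simp, ← Real.rpow_natCast (4*r) 2]
        norm_num
      -- s > c r so K s^2 ≥ K c^2 r^2
      have hsq : K * (c*r) ^ (2:ℕ) ≤ K * s ^ (2:ℕ) := by
        apply mul_le_mul_of_nonneg_left _ hK0.le
        apply pow_le_pow_left₀ (by positivity) hsc.le
      -- conclude squared bound for N(y + (y-u))
      have hw2 : superNorm p m k (y + (y - u)) ^ (2:ℕ) ≤ (2*(c*r)) ^ (2:ℕ) := by
        have hc16 : c ^ (2:ℕ) * (4+K) = 16 := by
          rw [hcsq]; field_simp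
        have h16 : (4*r) ^ (2:ℕ) - K * (c*r) ^ (2:ℕ) = (2*(c*r)) ^ (2:ℕ) := by
          linear_combination (-(r^2)) * hc16
        have hchain : superNorm p m k (y + (y - u)) ^ (2:ℕ)
            + (p-1)/2 * superNorm p m k u ^ (2:ℕ) ≤ (4*r) ^ (2:ℕ) := by
          have h5 := le_trans hb hrhs2
          rwa [e4] at h5
        have hKs : (p-1)/2 * superNorm p m k u ^ (2:ℕ) = K * s ^ (2:ℕ) := by
          rw [hKdef, hsdef]
        rw [hKs] at hchain
        linarith [hchain, hsq, h16]
      have hw : superNorm p m k (y + (y - u)) ≤ 2*(c*r) := by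
        have h1 := superNorm_nonneg p m k (y + (y - u))
        have h6 := Real.sqrt_le_sqrt hw2
        rwa [Real.sqrt_sq h1, Real.sqrt_sq (by positivity : (0:ℝ) ≤ 2*(c*r))] at h6
      have efin : y - (2⁻¹:ℝ) • u = (2⁻¹:ℝ) • (y + (y - u)) := by
        funext i
        simp only [Pi.sub_apply, Pi.smul_apply, Pi.add_apply, smul_eq_mul]
        ring
      rw [efin, superNorm_smul hp0 m k (by norm_num : (0:ℝ) ≤ 2⁻¹)]
      linarith [hw]
  -- volume estimates
  have hfin : volume (superBall p m k (0 : Fin n → ℝ) (2*r)) ≠ ⊤ := by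
    have hsub2 : superBall p m k (0 : Fin n → ℝ) (2*r) ⊆ Metric.closedBall 0 (2*r) := by
      intro y hy
      simp only [superBall, Set.mem_setOf_eq, sub_zero] at hy
      rw [Metric.mem_closedBall, dist_zero_right]
      rw [pi_norm_le_iff_of_nonneg (by positivity)]
      intro i
      rw [Real.norm_eq_abs]
      exact le_trans (coord_le_superNorm hp1.le hbd y i) hy
    exact ne_top_of_le_ne_top measure_closedBall_lt_top.ne (measure_mono hsub2)
  have htrans : volume (superBall p m k z (c*r))
      = volume (superBall p m k (0 : Fin n → ℝ) (c*r)) := by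
    have he : superBall p m k z (c*r)
        = (fun y => y + (-z)) ⁻¹' (superBall p m k (0 : Fin n → ℝ) (c*r)) := by
      ext y
      simp only [superBall, Set.mem_setOf_eq, Set.mem_preimage, sub_zero, sub_eq_add_neg, neg_zero, add_zero]
    rw [he, measure_preimage_add_right]
  have hscale : superBall p m k (0 : Fin n → ℝ) (c*r)
      = (c/2) • superBall p m k (0 : Fin n → ℝ) (2*r) := by
    ext y
    rw [Set.mem_smul_set_iff_inv_smul_mem₀ (by positivity : (c/2:ℝ) ≠ 0)]
    simp only [superBall, Set.mem_setOf_eq, sub_zero]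
    rw [superNorm_smul hp0 m k (by positivity : (0:ℝ) ≤ (c/2)⁻¹)]
    rw [inv_mul_le_iff₀ (by positivity : (0:ℝ) < c/2)]
    constructor
    · intro h
      calc superNorm p m k y ≤ c*r := h
        _ = c/2 * (2*r) := by ring
    · intro h
      calc superNorm p m k y ≤ c/2*(2*r) := h
        _ = c*r := by ring
  have hvol : volume (superBall p m k z (c*r))
      = ENNReal.ofReal ((c/2)^n) * volume (superBall p m k (0 : Fin n → ℝ) (2*r)) := by
    rw [htrans, hscale,
      Measure.addHaar_smul_of_nonneg volume (by positivity : (0:ℝ) ≤ c/2),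
      Module.finrank_fin_fun]
  calc (volume (superBall p m k u (2*r) ∩ superBall p m k (0 : Fin n → ℝ) s)).toReal
      ≤ (volume (superBall p m k z (c*r))).toReal := by
        apply ENNReal.toReal_mono
        · rw [hvol]; exact ENNReal.mul_ne_top ENNReal.ofReal_ne_top hfin
        · exact measure_mono hsub
    _ = (c/2)^n * (volume (superBall p m k (0 : Fin n → ℝ) (2*r))).toReal := by
        rw [hvol, ENNReal.toReal_mul, ENNReal.toReal_ofReal (by positivity)]
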